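/- Let w(x) = (x^3+5x^2−2x+2)/(x^2+4) for x ≥ 0 and w(x) = (x^3−x^2−2x+2)/(x^2+4) for x < 0, and f_K(x) = 1/(π(1−x^2)√(1−2x^2)) on (−1/√2,1/√2). Then ∫_{−1/√2}^{1/√2} w(x) f_K(x) dx = 3/5. -/

import Mathlib

set_option maxHeartbeats 1000000

open Real MeasureTheory Set

noncomputable def wojcikWeightQuarter (x : ℝ) : ℝ :=
  if 0 ≤ x then (x^3 + 5 * x^2 - 2 * x + 2) / (x^2 + 4)
  else (x^3 - x^2 - 2 * x + 2) / (x^2 + 4)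

noncomputable def g0Q (x : ℝ) : ℝ :=
  wojcikWeightQuarter x * (1 / (π * (1 - x^2) * Real.sqrt (1 - 2 * x^2)))

noncomputable def efQ (x : ℝ) : ℝ :=
  (2 * (x^2 + 1) / (x^2 + 4)) * (1 / (π * (1 - x^2) * Real.sqrt (1 - 2 * x^2)))

noncomputable def GQ (x : ℝ) : ℝ :=
  (1/π) * ((4/5) * Real.arcsin (x / Real.sqrt (1 - x^2))
    - (1/5) * Real.arcsin (3 * x / Real.sqrt (x^2 + 4)))

lemma arcsin1_hasDeriv {x : ℝ} (hx : x^2 < 1/2) :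
    HasDerivAt (fun y => Real.arcsin (y / Real.sqrt (1 - y^2)))
      (1 / ((1 - x^2) * Real.sqrt (1 - 2*x^2))) x := by
  have h1 : (0:ℝ) < 1 - x^2 := by nlinarith
  have h2 : (0:ℝ) < 1 - 2*x^2 := by nlinarith
  set s1 := Real.sqrt (1 - x^2) with hs1def
  set s2 := Real.sqrt (1 - 2*x^2) with hs2def
  have hs1 : 0 < s1 := Real.sqrt_pos.2 h1
  have hs2 : 0 < s2 := Real.sqrt_pos.2 h2
  have hs1sq : s1^2 = 1 - x^2 := Real.sq_sqrt h1.le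
  have hs2sq : s2^2 = 1 - 2*x^2 := Real.sq_sqrt h2.le
  have hinner : HasDerivAt (fun y : ℝ => (1:ℝ) - y^2) (-(2*x^1)) x :=
    (hasDerivAt_pow 2 x).const_sub 1
  have hsqrt : HasDerivAt (fun y => Real.sqrt (1 - y^2)) (-(2*x^1) / (2*s1)) x := by
    simpa using hinner.sqrt h1.ne'
  have hu : HasDerivAt (fun y => y / Real.sqrt (1 - y^2))
      ((1 * s1 - x * (-(2*x^1) / (2*s1))) / s1^2) x :=
    (hasDerivAt_id x).div hsqrt hs1.ne'
  have husq : (x/s1)^2 < 1 := by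
    rw [div_pow, hs1sq, div_lt_one h1]; nlinarith
  have hune : x/s1 ≠ -1 := by nlinarith [husq]
  have hune' : x/s1 ≠ 1 := by nlinarith [husq]
  have harc := (Real.hasDerivAt_arcsin hune hune').comp x hu
  have hkey : Real.sqrt (1 - (x/s1)^2) = s2 / s1 := by
    have : (1:ℝ) - (x/s1)^2 = (s2/s1)^2 := by
      rw [div_pow, div_pow, hs1sq, hs2sq]; field_simp; ring
    rw [this, Real.sqrt_sq (by positivity)]
  convert harc using 1
  · rfl
  · rfl
  · rfl
  rw [hkey, one_div_div]
  field_simp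
  linear_combination (x^2) * hs1sq

lemma arcsin2_hasDeriv {x : ℝ} (hx : x^2 < 1/2) :
    HasDerivAt (fun y => Real.arcsin (3 * y / Real.sqrt (y^2 + 4)))
      (6 / ((x^2 + 4) * Real.sqrt (1 - 2*x^2))) x := by
  have h2 : (0:ℝ) < 1 - 2*x^2 := by nlinarith
  have h3 : (0:ℝ) < x^2 + 4 := by positivity
  set s2 := Real.sqrt (1 - 2*x^2) with hs2def
  set s3 := Real.sqrt (x^2 + 4) with hs3def
  have hs2 : 0 < s2 := Real.sqrt_pos.2 h2
  have hs3 : 0 < s3 := Real.sqrt_pos.2 h3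
  have hs2sq : s2^2 = 1 - 2*x^2 := Real.sq_sqrt h2.le
  have hs3sq : s3^2 = x^2 + 4 := Real.sq_sqrt h3.le
  have hinner : HasDerivAt (fun y : ℝ => y^2 + 4) (2*x^1) x :=
    (hasDerivAt_pow 2 x).add_const 4
  have hsqrt : HasDerivAt (fun y => Real.sqrt (y^2 + 4)) (2*x^1 / (2*s3)) x :=
    hinner.sqrt h3.ne'
  have hnum : HasDerivAt (fun y : ℝ => 3*y) 3 x := by
    simpa using (hasDerivAt_id x).const_mul (3:ℝ)
  have hu : HasDerivAt (fun y => 3*y / Real.sqrt (y^2 + 4))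
      ((3 * s3 - 3*x * (2*x^1 / (2*s3))) / s3^2) x := hnum.div hsqrt hs3.ne'
  have husq : (3*x/s3)^2 < 1 := by
    rw [div_pow, hs3sq, div_lt_one h3]; nlinarith
  have hune : 3*x/s3 ≠ -1 := by nlinarith [husq]
  have hune' : 3*x/s3 ≠ 1 := by nlinarith [husq]
  have harc := (Real.hasDerivAt_arcsin hune hune').comp x hu
  have hkey : Real.sqrt (1 - (3*x/s3)^2) = 2*s2 / s3 := by
    have : (1:ℝ) - (3*x/s3)^2 = (2*s2/s3)^2 := by
      field_simp; linear_combination hs3sq - 4*hs2sq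
    rw [this, Real.sqrt_sq (by positivity)]
  convert harc using 1
  · rfl
  · rfl
  · rfl
  rw [hkey, one_div_div]
  field_simp
  linear_combination (-3*x^2) * hs3sq

noncomputable def hdomQ (x : ℝ) : ℝ := (5/π) * (1 / Real.sqrt (1 - 2*x^2))

noncomputable def HdomQ (x : ℝ) : ℝ :=
  (5/π) * ((Real.sqrt 2)⁻¹ * Real.arcsin (Real.sqrt 2 * x))

lemma HdomQ_hasDeriv {x : ℝ} (hx : x^2 < 1/2) : HasDerivAt HdomQ (hdomQ x) x := by
  have hsq : (Real.sqrt 2 * x)^2 = 2 * x^2 := by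
    rw [mul_pow, Real.sq_sqrt (by norm_num : (2:ℝ) ≥ 0)]
  have husq : (Real.sqrt 2 * x)^2 < 1 := by rw [hsq]; nlinarith
  have hne : Real.sqrt 2 * x ≠ -1 := by nlinarith [husq]
  have hne' : Real.sqrt 2 * x ≠ 1 := by nlinarith [husq]
  have hlin : HasDerivAt (fun y : ℝ => Real.sqrt 2 * y) (Real.sqrt 2) x := by
    simpa using (hasDerivAt_id x).const_mul (Real.sqrt 2)
  have harc := (Real.hasDerivAt_arcsin hne hne').comp x hlin
  have h2 := (harc.const_mul ((Real.sqrt 2)⁻¹ : ℝ)).const_mul ((5:ℝ)/π)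
  convert h2 using 1
  · rfl
  · rfl
  · rfl
  unfold hdomQ
  rw [hsq]
  have hs2 : Real.sqrt 2 ≠ 0 := by positivity
  field_simp

lemma GQ_hasDeriv {x : ℝ} (hx : x^2 < 1/2) : HasDerivAt GQ (efQ x) x := by
  have h1 : (0:ℝ) < 1 - x^2 := by nlinarith
  have h2 : (0:ℝ) < 1 - 2*x^2 := by nlinarith
  have hs2 : 0 < Real.sqrt (1 - 2*x^2) := Real.sqrt_pos.2 h2
  have h := (((arcsin1_hasDeriv hx).const_mul (4/5:ℝ)).sub
    ((arcsin2_hasDeriv hx).const_mul (1/5:ℝ))).const_mul (1/π : ℝ)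
  convert h using 1
  · rfl
  · rfl
  · rfl
  unfold efQ
  field_simp
  ring

theorem wojcik_quarter_weight_integral :
    ∫ x in (-(1 / Real.sqrt 2))..(1 / Real.sqrt 2),
      wojcikWeightQuarter x * (1 / (π * (1 - x^2) * Real.sqrt (1 - 2 * x^2))) = 3 / 5 := by
  have hs2pos : (0:ℝ) < Real.sqrt 2 := Real.sqrt_pos.2 (by norm_num)
  set a : ℝ := 1 / Real.sqrt 2 with ha
  have ha2 : a^2 = 1/2 := by
    rw [ha, div_pow, one_pow, Real.sq_sqrt (by norm_num : (2:ℝ) ≥ 0)]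
  have hapos : 0 < a := by positivity
  have haa : -a ≤ a := by linarith
  have hIoo : ∀ x ∈ Set.Ioo (-a) a, x^2 < 1/2 := by
    intro x hx
    have := sq_lt_sq' hx.1 hx.2
    rwa [ha2] at this
  have hIcc : ∀ x ∈ Set.Icc (-a) a, x^2 ≤ 1/2 := by
    intro x hx
    have := sq_le_sq' hx.1 hx.2
    rwa [ha2] at this
  -- continuity of GQ on the closed interval
  have hGcont : ContinuousOn GQ (Set.Icc (-a) a) := by
    unfold GQ
    apply ContinuousOn.mul continuousOn_const
    apply ContinuousOn.sub
    · apply ContinuousOn.mul continuousOn_const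
      apply Real.continuous_arcsin.comp_continuousOn
      apply ContinuousOn.div continuousOn_id
      · exact (Real.continuous_sqrt.comp (by continuity)).continuousOn
      · intro x hx
        have hx2 := hIcc x hx
        exact ne_of_gt (Real.sqrt_pos.2 (by nlinarith))
    · apply ContinuousOn.mul continuousOn_const
      apply Real.continuous_arcsin.comp_continuousOn
      apply ContinuousOn.div (by continuity : Continuous fun x : ℝ => 3*x).continuousOn
      · exact (Real.continuous_sqrt.comp (by continuity)).continuousOn
      · intro x _
        exact ne_of_gt (Real.sqrt_pos.2 (by positivity))
  have hefnn : ∀ x ∈ Set.Ioo (-a) a, 0 ≤ efQ x := by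
    intro x hx
    have hx2 := hIoo x hx
    have h1 : (0:ℝ) < 1 - x^2 := by nlinarith
    unfold efQ
    apply mul_nonneg (by positivity)
    exact div_nonneg zero_le_one
      (mul_nonneg (mul_nonneg Real.pi_pos.le h1.le) (Real.sqrt_nonneg _))
  have hefInt : IntervalIntegrable efQ volume (-a) a := by
    apply intervalIntegral.intervalIntegrable_deriv_of_nonneg (g := GQ)
    · rwa [Set.uIcc_of_le haa]
    · rw [min_eq_left haa, max_eq_right haa]
      exact fun x hx => GQ_hasDeriv (hIoo x hx)
    · rw [min_eq_left haa, max_eq_right haa]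
      exact hefnn
  have hFTC : ∫ x in (-a)..a, efQ x = GQ a - GQ (-a) :=
    intervalIntegral.integral_eq_sub_of_hasDeriv_right_of_le haa hGcont
      (fun x hx => (GQ_hasDeriv (hIoo x hx)).hasDerivWithinAt) hefInt
  -- endpoint values
  have hhalf : Real.sqrt (1/2) = a := by
    rw [ha, one_div, one_div, ← Real.sqrt_inv]
  have hs12 : Real.sqrt (1 - a^2) = a := by
    rw [ha2, show (1:ℝ) - 1/2 = 1/2 by norm_num, hhalf]
  have hs34 : Real.sqrt (a^2 + 4) = 3 * a := by
    rw [ha2, show (1/2 + 4 : ℝ) = (3*a)^2 by rw [mul_pow]; rw [ha2]; norm_num,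
      Real.sqrt_sq (by positivity)]
  have harg1 : a / Real.sqrt (1 - a^2) = 1 := by rw [hs12, div_self hapos.ne']
  have harg2 : 3 * a / Real.sqrt (a^2 + 4) = 1 := by
    rw [hs34, div_self (by positivity)]
  have hGa : GQ a = 3/10 := by
    unfold GQ
    rw [harg1, harg2, Real.arcsin_one]
    field_simp
    ring
  have hGna : GQ (-a) = -(3/10) := by
    unfold GQ
    rw [show (-a)^2 = a^2 by ring, show -a / Real.sqrt (1 - a^2) = -(a / Real.sqrt (1 - a^2)) by ring,
      show 3 * -a / Real.sqrt (a^2 + 4) = -(3 * a / Real.sqrt (a^2 + 4)) by ring,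
      harg1, harg2, Real.arcsin_neg, Real.arcsin_one]
    field_simp
    ring
  -- oddness of the remainder
  have hodd : ∀ x : ℝ, g0Q (-x) - efQ (-x) = -(g0Q x - efQ x) := by
    intro x
    have hden : (x^2 + 4 : ℝ) ≠ 0 := by positivity
    unfold g0Q efQ wojcikWeightQuarter
    rw [show ((-x)^2 : ℝ) = x^2 by ring, show ((-x)^3 : ℝ) = -x^3 by ring]
    split_ifs with h1 h2 h2
    · -- x = 0
      have hx0 : x = 0 := le_antisymm (by linarith) h2
      subst hx0; norm_num
    · -- -x ≥ 0, x < 0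
      have key : (-x^3 + 5*x^2 - 2*(-x) + 2)/(x^2+4) - 2*(x^2+1)/(x^2+4)
          = -((x^3 - x^2 - 2*x + 2)/(x^2+4) - 2*(x^2+1)/(x^2+4)) := by
        field_simp; ring
      linear_combination (1/(π*(1-x^2)*Real.sqrt (1-2*x^2))) * key
    · -- x ≥ 0, -x < 0
      have key : (-x^3 - x^2 - 2*(-x) + 2)/(x^2+4) - 2*(x^2+1)/(x^2+4)
          = -((x^3 + 5*x^2 - 2*x + 2)/(x^2+4) - 2*(x^2+1)/(x^2+4)) := by
        field_simp; ring
      linear_combination (1/(π*(1-x^2)*Real.sqrt (1-2*x^2))) * key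
    · exact absurd (by linarith : (0:ℝ) ≤ -x) h1
  -- dominating function for integrability of g0Q
  have hHcont : ContinuousOn HdomQ (Set.uIcc (-a) a) := by
    apply Continuous.continuousOn
    unfold HdomQ
    exact continuous_const.mul (continuous_const.mul
      (Real.continuous_arcsin.comp (continuous_const.mul continuous_id)))
  have hhnn : ∀ x ∈ Set.Ioo (-a) a, 0 ≤ hdomQ x := by
    intro x _
    have : (0:ℝ) < π := Real.pi_pos
    unfold hdomQ
    positivity
  have hhInt : IntervalIntegrable hdomQ volume (-a) a := by
    apply intervalIntegral.intervalIntegrable_deriv_of_nonneg (g := HdomQ) hHcont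
    · rw [min_eq_left haa, max_eq_right haa]
      exact fun x hx => HdomQ_hasDeriv (hIoo x hx)
    · rw [min_eq_left haa, max_eq_right haa]; exact hhnn
  have hg0meas : AEStronglyMeasurable g0Q (volume.restrict (Set.uIoc (-a) a)) := by
    apply Measurable.aestronglyMeasurable
    unfold g0Q wojcikWeightQuarter
    apply Measurable.mul
    · apply Measurable.ite (measurableSet_le measurable_const measurable_id) <;>
      · apply Measurable.div <;> fun_prop
    · simp only [one_div]
      apply Measurable.inv
      apply Measurable.mul
      · fun_prop
      · exact Real.continuous_sqrt.measurable.comp (by fun_prop)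
  have hbound : ∀ x ∈ Set.uIoc (-a) a, ‖g0Q x‖ ≤ ‖hdomQ x‖ := by
    intro x hx
    rw [Set.uIoc_of_le haa] at hx
    have hx2 : x^2 ≤ 1/2 := hIcc x ⟨hx.1.le, hx.2⟩
    have hx1 : -1 ≤ x := by nlinarith
    have hx1' : x ≤ 1 := by nlinarith
    have h1x : (0:ℝ) < 1 - x^2 := by nlinarith
    set S := Real.sqrt (1 - 2*x^2) with hSdef
    have hS0 : 0 ≤ S := Real.sqrt_nonneg _
    have hw : |wojcikWeightQuarter x| ≤ 5/2 := by
      unfold wojcikWeightQuarter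
      split_ifs with hsg
      all_goals rw [abs_div, abs_of_pos (show (0:ℝ) < x^2+4 by positivity),
        div_le_iff₀ (by positivity)]
      all_goals refine abs_le.2 ⟨?_, ?_⟩
      all_goals nlinarith [mul_nonneg (sub_nonneg.2 hx1') (sq_nonneg x),
        mul_nonneg (by linarith : (0:ℝ) ≤ x + 1) (sq_nonneg x), sq_nonneg x]
    have hFnn : (0:ℝ) ≤ 1/(π*(1-x^2)*S) :=
      div_nonneg zero_le_one (mul_nonneg (mul_nonneg Real.pi_pos.le h1x.le) hS0)
    have hhnn' : (0:ℝ) ≤ hdomQ x := by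
      have : (0:ℝ) < π := Real.pi_pos
      unfold hdomQ
      positivity
    rw [Real.norm_eq_abs, Real.norm_eq_abs, abs_of_nonneg hhnn']
    unfold g0Q
    rw [abs_mul, abs_of_nonneg hFnn]
    calc |wojcikWeightQuarter x| * (1/(π*(1-x^2)*S))
        ≤ (5/2) * (1/(π*(1-x^2)*S)) := mul_le_mul_of_nonneg_right hw hFnn
      _ ≤ hdomQ x := by
          unfold hdomQ
          rw [← hSdef]
          rcases eq_or_lt_of_le hS0 with hS | hS
          · rw [← hS]
            norm_num
          · have hstep : (1:ℝ)/(π*(1-x^2)*S) ≤ 1/(π*(1/2)*S) := by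
              apply one_div_le_one_div_of_le
              · exact mul_pos (mul_pos Real.pi_pos (by norm_num)) hS
              · have := Real.pi_pos
                nlinarith [mul_le_mul_of_nonneg_left (by linarith : (1:ℝ)/2 ≤ 1 - x^2)
                  (le_of_lt (mul_pos this hS))]
            calc (5/2 : ℝ) * (1/(π*(1-x^2)*S)) ≤ (5/2) * (1/(π*(1/2)*S)) :=
                  mul_le_mul_of_nonneg_left hstep (by norm_num)
              _ = 5/π * (1/S) := by
                  field_simp
  have hg0Int : IntervalIntegrable g0Q volume (-a) a := by
    apply hhInt.mono_fun hg0meas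
    exact (MeasureTheory.ae_restrict_iff' measurableSet_uIoc).2 (MeasureTheory.ae_of_all _ hbound)
  -- zero integral of the odd remainder
  have hoddint : ∫ x in (-a)..a, (g0Q x - efQ x) = 0 := by
    have h1 : ∫ x in (-a)..a, (g0Q (-x) - efQ (-x)) = ∫ x in (-a)..a, (g0Q x - efQ x) := by
      simpa using intervalIntegral.integral_comp_neg (fun x => g0Q x - efQ x) (a := -a) (b := a)
    have h2 : ∫ x in (-a)..a, (g0Q (-x) - efQ (-x)) = -∫ x in (-a)..a, (g0Q x - efQ x) := by
      simp only [hodd]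
      exact intervalIntegral.integral_neg
    linarith
  -- assemble
  have hsplit : ∫ x in (-a)..a, g0Q x = (∫ x in (-a)..a, efQ x) + ∫ x in (-a)..a, (g0Q x - efQ x) := by
    rw [← intervalIntegral.integral_add hefInt (hg0Int.sub hefInt)]
    exact intervalIntegral.integral_congr fun x _ => by ring
  show ∫ x in (-a)..a, g0Q x = 3/5
  rw [hsplit, hFTC, hoddint, hGa, hGna]
  norm_num
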